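/- Chen's identity: for bounded-variation paths X : [a,b] → ℝ^d and Y : [b,c] → ℝ^d with X(b) = Y(b), the signature of the concatenation X * Y equals the tensor product of the signatures: S(X * Y)_{a,c} = S(X)_{a,b} ⊗ S(Y)_{b,c}, where level k of the product is Σ_{ℓ=0}^k S(X)_ℓ ⊗ S(Y)_{k-ℓ}. It suffices to prove this for piecewise linear paths. -/

import Mathlib

/-- Signature coefficients of a path with derivative `σ'`, over the interval from the last
argument up to `b`; the head of the word is the earliest-integrated coordinate. -/
noncomputable def sig {d : ℕ} (σ' : ℝ → Fin d → ℝ) (b : ℝ) : List (Fin d) → ℝ → ℝ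
  | [], _ => 1
  | i :: w, t => ∫ s in t..b, σ' s i * sig σ' b w s

lemma sig_cont {d : ℕ} (σ' : ℝ → Fin d → ℝ) (hσc : ∀ i, Continuous fun t => σ' t i)
    (b : ℝ) : ∀ w : List (Fin d), Continuous (sig σ' b w) := by
  intro w
  induction w with
  | nil => simpa [sig] using continuous_const
  | cons i w ih =>
      have hF : Continuous fun s => σ' s i * sig σ' b w s := (hσc i).mul ih
      have : Continuous fun t => ∫ s in b..t, σ' s i * sig σ' b w s :=
        intervalIntegral.continuous_primitive
          (fun a b => hF.intervalIntegrable a b) b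
      have := this.neg
      simp only [sig]
      convert this using 1
      funext t
      rw [intervalIntegral.integral_symm]
      rfl

/-- Chen's identity: for a path on `[a,c]` viewed as the concatenation `X * Y` of its
restriction `X` to `[a,b]` and `Y` to `[b,c]` (so the endpoint condition `X(b) = Y(b)` holds
automatically), the signature of the concatenation is the tensor product of the signatures:
for every word `w` of length `k`,
`S(X*Y)_{a,c}(w) = ∑_{ℓ=0}^k S(X)_{a,b}(first ℓ letters) · S(Y)_{b,c}(last k−ℓ letters)`,
which is the word-coefficient form of `S(X*Y)_k = ∑_{ℓ=0}^k S(X)_ℓ ⊗ S(Y)_{k-ℓ}`. -/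
theorem chen_identity (d : ℕ) (a b c : ℝ) (hab : a ≤ b) (hbc : b ≤ c)
    (σ' : ℝ → Fin d → ℝ) (hσc : ∀ i, Continuous fun t => σ' t i) :
    ∀ w : List (Fin d),
      sig σ' c w a
        = ∑ n ∈ Finset.range (w.length + 1),
            sig σ' b (w.take n) a * sig σ' c (w.drop n) b := by
  suffices h : ∀ (w : List (Fin d)) (t : ℝ),
      sig σ' c w t
        = ∑ n ∈ Finset.range (w.length + 1),
            sig σ' b (w.take n) t * sig σ' c (w.drop n) b from fun w => h w a
  intro w
  induction w with
  | nil => intro t; simp [sig]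
  | cons i w ih =>
      intro t
      have hcont : ∀ (b' : ℝ) (v : List (Fin d)),
          Continuous fun s => σ' s i * sig σ' b' v s :=
        fun b' v => (hσc i).mul (sig_cont σ' hσc b' v)
      have hsplit : sig σ' c (i :: w) t
          = (∫ s in t..b, σ' s i * sig σ' c w s)
            + ∫ s in b..c, σ' s i * sig σ' c w s := by
        simp only [sig]
        rw [intervalIntegral.integral_add_adjacent_intervals
          ((hcont c w).intervalIntegrable t b) ((hcont c w).intervalIntegrable b c)]
      have h2 : (∫ s in b..c, σ' s i * sig σ' c w s) = sig σ' c (i :: w) b := rfl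
      have h1 : (∫ s in t..b, σ' s i * sig σ' c w s)
          = ∑ n ∈ Finset.range (w.length + 1),
              sig σ' b (i :: w.take n) t * sig σ' c (w.drop n) b := by
        have : (∫ s in t..b, σ' s i * sig σ' c w s)
            = ∫ s in t..b, ∑ n ∈ Finset.range (w.length + 1),
                σ' s i * sig σ' b (w.take n) s * sig σ' c (w.drop n) b := by
          congr 1
          funext s
          rw [ih s, Finset.mul_sum]
          simp [mul_assoc]
        rw [this, intervalIntegral.integral_finset_sum]
        · refine Finset.sum_congr rfl fun n _ => ?_
          rw [intervalIntegral.integral_mul_const]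
          rfl
        · intro n _
          exact (((hσc i).mul (sig_cont σ' hσc b (w.take n))).mul
            continuous_const).intervalIntegrable t b
      rw [hsplit, h1, h2]
      conv_rhs => rw [Finset.sum_range_succ']
      simp [sig]
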